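/- Let V be a finite type, r : V → V → Prop a directed graph relation such that (i) every vertex has at most one r-predecessor (for each v, if r u v and r u' v then u = u'), and (ii) there exists h : V → ℝ with h(u) < h(v) whenever r u v. Then the simple graph on V whose adjacency relation is u ∼ v ↔ (r u v ∨ r v u) is acyclic, i.e. a forest. -/

import Mathlib

/-- Let `r` be a directed graph relation on a finite vertex type `V` such that
every vertex has at most one `r`-predecessor and all `r`-edges point strictly
upwards along some height function `h : V → ℝ`. Then the underlying simple
graph (with adjacency `u ∼ v ↔ r u v ∨ r v u`) is acyclic, i.e. a forest. -/
theorem upward_forest (V : Type*) [Finite V] (r : V → V → Prop)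
    (hpred : ∀ u u' v : V, r u v → r u' v → u = u')
    (hheight : ∃ h : V → ℝ, ∀ u v : V, r u v → h u < h v)
    (G : SimpleGraph V) (hG : ∀ u v : V, G.Adj u v ↔ (r u v ∨ r v u)) :
    G.IsAcyclic := by
  classical
  obtain ⟨h, hmono⟩ := hheight
  intro v c hc
  -- top and bottom of a dart
  set top : G.Dart → V := fun d => if r d.toProd.1 d.toProd.2 then d.toProd.2 else d.toProd.1
    with htop
  set bot : G.Dart → V := fun d => if r d.toProd.1 d.toProd.2 then d.toProd.1 else d.toProd.2
    with hbot
  have hrd : ∀ d : G.Dart, r (bot d) (top d) := by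
    intro d
    have hadj := d.adj
    rw [hG] at hadj
    by_cases hcase : r d.toProd.1 d.toProd.2
    · simp [htop, hbot, hcase]
    · simp only [htop, hbot, if_neg hcase]
      exact hadj.resolve_left hcase
  have hedge : ∀ d : G.Dart, d.edge = s(bot d, top d) := by
    intro d
    by_cases hcase : r d.toProd.1 d.toProd.2 <;>
      simp [htop, hbot, hcase, SimpleGraph.Dart.edge, Sym2.eq_swap]
  have hmem : ∀ d : G.Dart, d ∈ c.darts → bot d ∈ c.support ∧ top d ∈ c.support := by
    intro d hd
    have h1 := SimpleGraph.Walk.dart_fst_mem_support_of_mem_darts c hd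
    have h2 := SimpleGraph.Walk.dart_snd_mem_support_of_mem_darts c hd
    by_cases hcase : r d.toProd.1 d.toProd.2 <;> simp [htop, hbot, hcase, h1, h2]
  -- edges of the cycle are nodup, hence darts are nodup and injectively mapped
  have hedges : (c.darts.map SimpleGraph.Dart.edge).Nodup := hc.edges_nodup
  have hdartsnd : c.darts.Nodup := hedges.of_map _
  have hinj : ∀ d1 ∈ c.darts, ∀ d2 ∈ c.darts, top d1 = top d2 → d1 = d2 := by
    intro d1 h1 d2 h2 htops
    have hb : bot d1 = bot d2 := hpred _ _ _ (hrd d1) (htops ▸ hrd d2)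
    have he : d1.edge = d2.edge := by rw [hedge, hedge, hb, htops]
    exact List.inj_on_of_nodup_map hedges h1 h2 he
  have hmapnd : (c.darts.map top).Nodup := hdartsnd.map_on hinj
  -- cardinality argument: tops cover all of the support
  have hlen : (c.darts.map top).length = c.length := by
    rw [List.length_map, SimpleGraph.Walk.length_darts]
  have htailnd : c.support.tail.Nodup := hc.support_nodup
  have htaillen : c.support.tail.length = c.length := by
    have := SimpleGraph.Walk.length_support c
    have h2 : c.support ≠ [] := SimpleGraph.Walk.support_ne_nil c
    cases hs : c.support with
    | nil => exact absurd hs h2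
    | cons a l => rw [hs] at this; simp at this; simpa using this
  -- support and support.tail have the same toFinset
  have hne : c.support.tail ≠ [] := by
    intro hnil
    rw [hnil] at htaillen
    have := hc.three_le_length
    simp at htaillen
    omega
  have hvmemtail : v ∈ c.support.tail := by
    have h1 := List.getLast_tail (l := c.support) hne
    rw [SimpleGraph.Walk.getLast_support] at h1
    have h2 := List.getLast_mem hne
    rwa [h1] at h2
  have hsupfin : c.support.toFinset = c.support.tail.toFinset := by
    cases hs : c.support with
    | nil => exact absurd hs (SimpleGraph.Walk.support_ne_nil c)
    | cons a l =>
        have hav : a = v := by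
          have := SimpleGraph.Walk.support_eq_cons c
          rw [hs] at this; exact (List.cons.injEq _ _ _ _ ▸ this).1
        rw [hs] at hvmemtail
        simp only [List.tail_cons] at hvmemtail ⊢
        rw [List.toFinset_cons]
        exact Finset.insert_eq_self.2 (List.mem_toFinset.2 (by rw [hav]; exact hvmemtail))
  have hsub : (c.darts.map top).toFinset ⊆ c.support.tail.toFinset := by
    intro x hx
    rw [List.mem_toFinset] at hx
    obtain ⟨d, hd, rfl⟩ := List.mem_map.mp hx
    rw [← hsupfin, List.mem_toFinset]
    exact (hmem d hd).2
  have hcard1 : (c.darts.map top).toFinset.card = c.length := by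
    rw [List.toFinset_card_of_nodup hmapnd, hlen]
  have hcard2 : c.support.tail.toFinset.card = c.length := by
    rw [List.toFinset_card_of_nodup htailnd, htaillen]
  have heqfin : (c.darts.map top).toFinset = c.support.tail.toFinset :=
    Finset.eq_of_subset_of_card_le hsub (by omega)
  -- take the vertex of minimal height on the support
  obtain ⟨v0, hv0⟩ : ∃ v0, v0 ∈ c.support.argmin h := by
    cases hs : c.support.argmin h with
    | none => exact absurd (List.argmin_eq_none.mp hs) (SimpleGraph.Walk.support_ne_nil c)
    | some a => exact ⟨a, by simp [hs]⟩
  have hv0mem : v0 ∈ c.support := List.argmin_mem hv0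
  have hv0min : ∀ w ∈ c.support, h v0 ≤ h w := fun w hw => List.le_of_mem_argmin hw hv0
  -- v0 is the top of some dart
  have hv0tail : v0 ∈ c.support.tail.toFinset := by
    rw [← hsupfin, List.mem_toFinset]; exact hv0mem
  rw [← heqfin, List.mem_toFinset, List.mem_map] at hv0tail
  obtain ⟨d, hd, hdv0⟩ := hv0tail
  have hlt : h (bot d) < h v0 := hdv0 ▸ hmono _ _ (hrd d)
  exact absurd (hv0min _ (hmem d hd).1) (not_le.mpr hlt)
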